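/- Let A be an n×n labeled transition matrix (whose entries do not contain τ), S a boolean n×n matrix of silent steps, ρ a boolean termination vector, V a surjective boolean n×N collector, R = VVᵀ, Π_V = (S ⊓ R)*, and Π = S*. Then Π_V ≤ Π, and if V satisfies the branching-bisimulation conditions VVᵀ(I + Π_V S)V = (I + Π_V S)V, VVᵀΠ_V A V = Π_V A V, and VVᵀΠ_V ρ = Π_V ρ, then V also satisfies the weak-bisimulation conditions VVᵀΠV = ΠV, VVᵀΠAΠV = ΠAΠV, and VVᵀΠρ = Πρ (every branching bisimulation is a weak bisimulation). -/

import Mathlib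

open Matrix

instance : CommSemiring Prop where
  add a b := a ∨ b
  add_assoc a b c := propext or_assoc
  zero := False
  zero_add a := false_or a
  add_zero a := or_false a
  add_comm a b := propext or_comm
  nsmul n p := n ≠ 0 ∧ p
  nsmul_zero p := by show ((0:ℕ) ≠ 0 ∧ p) = False; simp
  nsmul_succ n p := by
    show ((n + 1 : ℕ) ≠ 0 ∧ p) = ((n ≠ 0 ∧ p) ∨ p)
    by_cases h : n = 0 <;> simp [h]
  mul a b := a ∧ b
  mul_assoc a b c := propext and_assoc
  one := True
  one_mul a := true_and a
  mul_one a := and_true a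
  left_distrib a b c := propext and_or_left
  right_distrib a b c := propext or_and_right
  zero_mul a := false_and a
  mul_zero a := and_false a
  mul_comm a b := propext and_comm

instance {α : Type*} : CommSemiring (Set α) where
  add a b := a ∪ b
  add_assoc := Set.union_assoc
  zero := (∅ : Set α)
  zero_add := Set.empty_union
  add_zero := Set.union_empty
  add_comm := Set.union_comm
  nsmul n s := {x ∈ s | n ≠ 0}
  nsmul_zero s := by show {x ∈ s | (0:ℕ) ≠ 0} = (∅ : Set α); simp
  nsmul_succ n s := by
    show {x ∈ s | (n + 1 : ℕ) ≠ 0} = {x ∈ s | n ≠ 0} ∪ s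
    by_cases h : n = 0 <;> ext x <;> simp [h]
  mul a b := a ∩ b
  mul_assoc := Set.inter_assoc
  one := (Set.univ : Set α)
  one_mul := Set.univ_inter
  mul_one := Set.inter_univ
  left_distrib := Set.inter_union_distrib_left
  right_distrib := Set.union_inter_distrib_right
  zero_mul := Set.empty_inter
  mul_zero := Set.inter_empty
  mul_comm := Set.inter_comm

/-- Embedding of boolean matrices into `Set 𝒜`-labeled matrices:
a `True` entry becomes the full action set, a `False` entry the empty set. -/
def emb (𝒜 : Type*) {m p : Type*} (M : Matrix m p Prop) : Matrix m p (Set 𝒜) :=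
  Matrix.of fun i j => {_a : 𝒜 | M i j}

/-- Reflexive-transitive closure `S* = Σ_{k ≥ 0} S^k` of a boolean matrix. -/
def mstar {n : ℕ} (S : Matrix (Fin n) (Fin n) Prop) : Matrix (Fin n) (Fin n) Prop :=
  Matrix.of fun i j => ∃ k : ℕ, (S ^ k) i j

/-- Elementwise product (meet) of boolean matrices. -/
def minf {n : ℕ} (A B : Matrix (Fin n) (Fin n) Prop) : Matrix (Fin n) (Fin n) Prop :=
  Matrix.of fun i j => A i j ∧ B i j

section auxlemmas

lemma prop_add_def (a b : Prop) : (a + b) = (a ∨ b) := rfl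
lemma prop_mul_def (a b : Prop) : (a * b) = (a ∧ b) := rfl
lemma prop_zero_def : (0 : Prop) = False := rfl
lemma prop_one_def : (1 : Prop) = True := rfl

lemma prop_sum_iff {α : Type*} (s : Finset α) (f : α → Prop) :
    (∑ a ∈ s, f a) ↔ ∃ a ∈ s, f a := by
  classical
  induction s using Finset.induction_on with
  | empty => rw [Finset.sum_empty, prop_zero_def]; simp
  | insert _ _ h ih =>
      rw [Finset.sum_insert h, prop_add_def]
      simp only [Finset.mem_insert, ih]
      constructor
      · rintro (h1 | ⟨a, ha, hfa⟩)
        exacts [⟨_, Or.inl rfl, h1⟩, ⟨a, Or.inr ha, hfa⟩]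
      · rintro ⟨a, (rfl | ha), hfa⟩
        exacts [Or.inl hfa, Or.inr ⟨a, ha, hfa⟩]

lemma set_mul_def {α : Type*} (s t : Set α) : s * t = s ∩ t := rfl
lemma set_add_def {α : Type*} (s t : Set α) : s + t = s ∪ t := rfl
lemma set_zero_def {α : Type*} : (0 : Set α) = ∅ := rfl

lemma set_sum_mem_iff {α β : Type*} (s : Finset β) (f : β → Set α) (x : α) :
    x ∈ ∑ b ∈ s, f b ↔ ∃ b ∈ s, x ∈ f b := by
  classical
  induction s using Finset.induction_on with
  | empty => rw [Finset.sum_empty, set_zero_def]; simp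
  | insert _ _ h ih =>
      rw [Finset.sum_insert h, set_add_def]
      rw [Set.mem_union, ih]
      simp only [Finset.mem_insert]
      constructor
      · rintro (h1 | ⟨a, ha, hfa⟩)
        exacts [⟨_, Or.inl rfl, h1⟩, ⟨a, Or.inr ha, hfa⟩]
      · rintro ⟨a, (rfl | ha), hfa⟩
        exacts [Or.inl hfa, Or.inr ⟨a, ha, hfa⟩]

lemma pmul_apply {l m p : Type*} [Fintype m] (M : Matrix l m Prop) (N : Matrix m p Prop)
    (i : l) (j : p) : (M * N) i j ↔ ∃ k, M i k ∧ N k j := by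
  rw [Matrix.mul_apply, prop_sum_iff]
  simp [prop_mul_def]

lemma smul_mem_apply {𝒜 l m p : Type*} [Fintype m] (M : Matrix l m (Set 𝒜))
    (N : Matrix m p (Set 𝒜)) (i : l) (j : p) (a : 𝒜) :
    a ∈ (M * N) i j ↔ ∃ k, a ∈ M i k ∧ a ∈ N k j := by
  rw [Matrix.mul_apply, set_sum_mem_iff]
  simp [set_mul_def]

lemma emb_mem {𝒜 m p : Type*} (M : Matrix m p Prop) (i : m) (j : p) (a : 𝒜) :
    a ∈ emb 𝒜 M i j ↔ M i j := Iff.rfl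

lemma pone_apply {n : Type*} [DecidableEq n] (i j : n) :
    (1 : Matrix n n Prop) i j ↔ i = j := by
  by_cases h : i = j <;> simp [Matrix.one_apply, h, prop_one_def, prop_zero_def]

lemma padd_apply {m p : Type*} (M N : Matrix m p Prop) (i : m) (j : p) :
    (M + N) i j ↔ (M i j ∨ N i j) := Iff.rfl

lemma pow_iff_rtg {n : ℕ} (M : Matrix (Fin n) (Fin n) Prop) (i j : Fin n) :
    (∃ k, (M ^ k) i j) ↔ Relation.ReflTransGen (fun a b => M a b) i j := by
  constructor
  · rintro ⟨k, h⟩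
    induction k generalizing j with
    | zero =>
        rw [pow_zero] at h
        have := (pone_apply i j).mp h
        subst this
        exact Relation.ReflTransGen.refl
    | succ k ih =>
        rw [pow_succ, pmul_apply] at h
        obtain ⟨m, h1, h2⟩ := h
        exact (ih m h1).tail h2
  · intro h
    induction h with
    | refl => exact ⟨0, by rw [pow_zero]; exact (pone_apply i i).mpr rfl⟩
    | tail _ h2 ih =>
        obtain ⟨k, hk⟩ := ih
        exact ⟨k+1, by rw [pow_succ]; exact (pmul_apply _ _ _ _).mpr ⟨_, hk, h2⟩⟩

end auxlemmas
/-- `Pi_V ≤ Pi`, and every branching bisimulation is a weak bisimulation. -/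
theorem branching_implies_weak {n N : ℕ} {𝒜 : Type*} (τ : 𝒜)
    (A : Matrix (Fin n) (Fin n) (Set 𝒜)) (hA : ∀ i j, τ ∉ A i j)
    (S : Matrix (Fin n) (Fin n) Prop) (ρ : Matrix (Fin n) (Fin 1) Prop)
    (V : Matrix (Fin n) (Fin N) Prop)
    (hcol : ∀ i, ∃! j, V i j) (hsurj : ∀ j, ∃ i, V i j)
    (R : Matrix (Fin n) (Fin n) Prop) (hR : R = V * Vᵀ)
    (PiV : Matrix (Fin n) (Fin n) Prop) (hPiV : PiV = mstar (minf S R))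
    (Pi : Matrix (Fin n) (Fin n) Prop) (hPi : Pi = mstar S) :
    (∀ i j, PiV i j ≤ Pi i j) ∧
    ((V * Vᵀ * (1 + PiV * S) * V = (1 + PiV * S) * V ∧
        emb 𝒜 V * emb 𝒜 Vᵀ * emb 𝒜 PiV * A * emb 𝒜 V = emb 𝒜 PiV * A * emb 𝒜 V ∧
        V * Vᵀ * PiV * ρ = PiV * ρ) →
      (V * Vᵀ * Pi * V = Pi * V ∧
        emb 𝒜 V * emb 𝒜 Vᵀ * emb 𝒜 Pi * A * emb 𝒜 Pi * emb 𝒜 V =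
          emb 𝒜 Pi * A * emb 𝒜 Pi * emb 𝒜 V ∧
        V * Vᵀ * Pi * ρ = Pi * ρ)) := by
  classical
  subst hR hPiV hPi
  -- abbreviations
  let Rf : Fin n → Fin n → Prop := fun i j => ∃ c, V i c ∧ V j c
  have hVVt : ∀ i j, (V * Vᵀ) i j ↔ Rf i j := by
    intro i j; rw [pmul_apply]; exact Iff.rfl
  have hRrefl : ∀ i, Rf i i := by
    intro i; obtain ⟨c, hc, -⟩ := hcol i; exact ⟨c, hc, hc⟩
  have hVuniq : ∀ {i : Fin n} {c d : Fin N}, V i c → V i d → c = d := by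
    intro i c d hc hd; obtain ⟨e, -, hu⟩ := hcol i; exact (hu c hc).trans (hu d hd).symm
  have hRsat : ∀ {i j c}, Rf i j → V j c → V i c := by
    rintro i j c ⟨d, hid, hjd⟩ hjc; rwa [hVuniq hjd hjc] at hid
  have hRtrans : ∀ {i j k}, Rf i j → Rf j k → Rf i k := by
    rintro i j k ⟨c, hic, hjc⟩ ⟨d, hjd, hkd⟩
    exact ⟨c, hic, by rwa [hVuniq hjd hjc] at hkd⟩
  let SR : Fin n → Fin n → Prop := fun a b => S a b ∧ Rf a b
  have hPiVe : ∀ i j, mstar (minf S (V * Vᵀ)) i j ↔ Relation.ReflTransGen SR i j := by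
    intro i j
    show (∃ k, ((minf S (V * Vᵀ)) ^ k) i j) ↔ _
    rw [pow_iff_rtg]
    have he : (fun a b => minf S (V * Vᵀ) a b) = SR := by
      funext a b
      show ((S a b ∧ (V * Vᵀ) a b)) = (S a b ∧ Rf a b)
      exact propext (and_congr_right fun _ => hVVt a b)
    rw [he]
  have hPie : ∀ i j, mstar S i j ↔ Relation.ReflTransGen (fun a b => S a b) i j :=
    fun i j => pow_iff_rtg S i j
  have hSRle : ∀ {i j}, Relation.ReflTransGen SR i j → Rf i j := by
    intro i j h
    induction h with
    | refl => exact hRrefl i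
    | tail _ h2 ih => exact hRtrans ih h2.2
  constructor
  · -- PiV ≤ Pi
    intro i j
    intro h
    exact (hPie i j).mpr (Relation.ReflTransGen.mono (fun a b hab => hab.1) _ _ ((hPiVe i j).mp h))
  rintro ⟨h1, h2, h3⟩
  let T : Fin n → Fin n → Prop := fun i j => ∃ k, Relation.ReflTransGen SR i k ∧ S k j
  have hTle : ∀ {i j}, T i j → Relation.ReflTransGen (fun a b => S a b) i j := by
    rintro i j ⟨k, hk, hs⟩; exact (Relation.ReflTransGen.mono (fun a b hab => hab.1) _ _ hk).tail hs
  have hTsle : ∀ {i j}, Relation.ReflTransGen T i j →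
      Relation.ReflTransGen (fun a b => S a b) i j := by
    intro i j h
    induction h with
    | refl => exact .refl
    | tail _ h2 ih => exact ih.trans (hTle h2)
  have hdec : ∀ {i j}, Relation.ReflTransGen (fun a b => S a b) i j →
      ∃ k, Relation.ReflTransGen T i k ∧ Relation.ReflTransGen SR k j := by
    intro i j h
    induction h using Relation.ReflTransGen.head_induction_on with
    | refl => exact ⟨j, .refl, .refl⟩
    | head hab hbj ih =>
        obtain ⟨k, htk, hsr⟩ := ih
        exact ⟨k, htk.head ⟨_, Relation.ReflTransGen.refl, hab⟩, hsr⟩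
  -- pointwise form of the first branching condition
  have hMeq : ∀ i c, (((1 + mstar (minf S (V * Vᵀ)) * S) * V : Matrix (Fin n) (Fin N) Prop)) i c ↔
      (V i c ∨ ∃ k, T i k ∧ V k c) := by
    intro i c
    rw [pmul_apply]
    constructor
    · rintro ⟨k, hk, hVk⟩
      rcases (padd_apply _ _ i k).mp hk with h | h
      · rcases (pone_apply i k).mp h with rfl; exact Or.inl hVk
      · rw [pmul_apply] at h
        obtain ⟨m, hm, hS⟩ := h
        exact Or.inr ⟨k, ⟨m, (hPiVe i m).mp hm, hS⟩, hVk⟩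
    · rintro (h | ⟨k, ⟨m, hrt, hS⟩, hVk⟩)
      · exact ⟨i, (padd_apply _ _ i i).mpr (Or.inl ((pone_apply i i).mpr rfl)), h⟩
      · exact ⟨k, (padd_apply _ _ i k).mpr
          (Or.inr ((pmul_apply _ _ _ _).mpr ⟨m, (hPiVe i m).mpr hrt, hS⟩)), hVk⟩
  have hB1 : ∀ {i i' c}, Rf i i' → (V i' c ∨ ∃ k, T i' k ∧ V k c) →
      (V i c ∨ ∃ k, T i k ∧ V k c) := by
    intro i i' c hRii h
    have hl : ((V * Vᵀ * ((1 + mstar (minf S (V * Vᵀ)) * S) * V) : Matrix (Fin n) (Fin N) Prop)) i c :=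
      (pmul_apply _ _ _ _).mpr ⟨i', (hVVt i i').mpr hRii, (hMeq i' c).mpr h⟩
    rw [← Matrix.mul_assoc, h1] at hl
    exact (hMeq i c).mp hl
  -- the core step lemma
  have step : ∀ (X : Fin n → Prop), (∀ i i', Rf i i' → X i' → X i) →
      ∀ j, X j → ∀ i', Relation.ReflTransGen T i' j → ∀ i, Rf i i' →
      ∃ j', Relation.ReflTransGen T i j' ∧ X j' := by
    intro X hX j hXj i' hpath
    induction hpath using Relation.ReflTransGen.head_induction_on with
    | refl => intro i hRi; exact ⟨i, .refl, hX i j hRi hXj⟩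
    | @head a b hab hbj ih =>
        intro i hRi
        obtain ⟨d, hbd, -⟩ := hcol b
        rcases hB1 hRi (Or.inr ⟨b, hab, hbd⟩) with hVid | ⟨k₂, hTk, hVkd⟩
        · exact ih i ⟨d, hVid, hbd⟩
        · obtain ⟨j', hj1, hj2⟩ := ih k₂ ⟨d, hVkd, hbd⟩
          exact ⟨j', hj1.head hTk, hj2⟩
  refine ⟨?_, ?_, ?_⟩
  · -- first weak condition
    ext i c
    have hre : V * Vᵀ * mstar S * V = (V * Vᵀ) * (mstar S * V) := by
      simp only [Matrix.mul_assoc]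
    rw [hre]
    constructor
    · intro h
      rw [pmul_apply] at h
      obtain ⟨i', hVV, hPV⟩ := h
      rw [pmul_apply] at hPV
      obtain ⟨j, hS, hVj⟩ := hPV
      obtain ⟨k, hTk, hSR⟩ := hdec ((hPie i' j).mp hS)
      obtain ⟨j', htj', hVj'⟩ := step (fun u => V u c) (fun u u' hr hv => hRsat hr hv)
        k (hRsat (hSRle hSR) hVj) i' hTk i ((hVVt i i').mp hVV)
      exact (pmul_apply _ _ _ _).mpr ⟨j', (hPie i j').mpr (hTsle htj'), hVj'⟩
    · intro h
      exact (pmul_apply _ _ _ _).mpr ⟨i, (hVVt i i).mpr (hRrefl i), h⟩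
  · -- second weak condition
    ext i c a
    have hre : emb 𝒜 V * emb 𝒜 Vᵀ * emb 𝒜 (mstar S) * A * emb 𝒜 (mstar S) * emb 𝒜 V =
        (emb 𝒜 V * emb 𝒜 Vᵀ) * (emb 𝒜 (mstar S) * A * emb 𝒜 (mstar S) * emb 𝒜 V) := by
      simp only [Matrix.mul_assoc]
    rw [hre]
    have hVVtS : ∀ p q, a ∈ (emb 𝒜 V * emb 𝒜 Vᵀ) p q ↔ Rf p q := by
      intro p q; rw [smul_mem_apply]; exact Iff.rfl
    -- pointwise form of the big product
    have hBig : ∀ p, a ∈ (emb 𝒜 (mstar S) * A * emb 𝒜 (mstar S) * emb 𝒜 V) p c ↔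
        ∃ m, (∃ l, (∃ k, mstar S p k ∧ a ∈ A k l) ∧ mstar S l m) ∧ V m c := by
      intro p
      simp only [smul_mem_apply, emb_mem]
    -- pointwise form of the second branching condition
    have hZeq : ∀ p (d : Fin N), a ∈ (emb 𝒜 (mstar (minf S (V * Vᵀ))) * A * emb 𝒜 V) p d ↔
        ∃ l, (∃ k, Relation.ReflTransGen SR p k ∧ a ∈ A k l) ∧ V l d := by
      intro p d
      simp only [smul_mem_apply, emb_mem, hPiVe]
    have hB2 : ∀ {p p' d}, Rf p p' →
        (∃ l, (∃ k, Relation.ReflTransGen SR p' k ∧ a ∈ A k l) ∧ V l d) →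
        (∃ l, (∃ k, Relation.ReflTransGen SR p k ∧ a ∈ A k l) ∧ V l d) := by
      intro p p' d hRpp hZ
      have hl : a ∈ ((emb 𝒜 V * emb 𝒜 Vᵀ) *
          (emb 𝒜 (mstar (minf S (V * Vᵀ))) * A * emb 𝒜 V)) p d :=
        (smul_mem_apply _ _ _ _ _).mpr ⟨p', (hVVtS p p').mpr hRpp, (hZeq p' d).mpr hZ⟩
      rw [← Matrix.mul_assoc, ← Matrix.mul_assoc, h2] at hl
      exact (hZeq p d).mp hl
    -- the saturated column predicate
    set X : Fin n → Prop := fun p => ∃ l, (∃ k, Relation.ReflTransGen SR p k ∧ a ∈ A k l) ∧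
      (∃ m, Relation.ReflTransGen T l m ∧ V m c) with hXdef
    have hXsat : ∀ p p', Rf p p' → X p' → X p := by
      rintro p p' hRpp ⟨l, ⟨k, hsr, hAa⟩, hG⟩
      obtain ⟨d, hld, -⟩ := hcol l
      obtain ⟨l₂, ⟨k₂, hsr₂, hA₂⟩, hl₂d⟩ := hB2 hRpp ⟨l, ⟨k, hsr, hAa⟩, hld⟩
      obtain ⟨m, hTm, hVm⟩ := hG
      obtain ⟨m', hTm', hVm'⟩ := step (fun u => V u c) (fun u u' hr hv => hRsat hr hv)
        m hVm l hTm l₂ ⟨d, hl₂d, hld⟩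
      exact ⟨l₂, ⟨k₂, hsr₂, hA₂⟩, ⟨m', hTm', hVm'⟩⟩
    have hFX : ∀ p, (a ∈ (emb 𝒜 (mstar S) * A * emb 𝒜 (mstar S) * emb 𝒜 V) p c) ↔
        ∃ q, Relation.ReflTransGen T p q ∧ X q := by
      intro p
      rw [hBig]
      constructor
      · rintro ⟨m, ⟨l, ⟨k, hPik, hAa⟩, hPlm⟩, hVm⟩
        obtain ⟨q, htq, hsrq⟩ := hdec ((hPie p k).mp hPik)
        obtain ⟨m₁, htm₁, hsrm₁⟩ := hdec ((hPie l m).mp hPlm)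
        exact ⟨q, htq, ⟨l, ⟨k, hsrq, hAa⟩, ⟨m₁, htm₁, hRsat (hSRle hsrm₁) hVm⟩⟩⟩
      · rintro ⟨q, htq, ⟨l, ⟨k, hsr, hAa⟩, ⟨m, hTm, hVm⟩⟩⟩
        refine ⟨m, ⟨l, ⟨k, ?_, hAa⟩, (hPie l m).mpr (hTsle hTm)⟩, hVm⟩
        exact (hPie p k).mpr ((hTsle htq).trans (Relation.ReflTransGen.mono (fun _ _ hh => hh.1) _ _ hsr))
    constructor
    · intro h
      rw [smul_mem_apply] at h
      obtain ⟨i', hVV, hF⟩ := h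
      obtain ⟨q, htq, hXq⟩ := (hFX i').mp hF
      obtain ⟨q', htq', hXq'⟩ := step X hXsat q hXq i' htq i ((hVVtS i i').mp hVV)
      exact (hFX i).mpr ⟨q', htq', hXq'⟩
    · intro h
      exact (smul_mem_apply _ _ _ _ _).mpr ⟨i, (hVVtS i i).mpr (hRrefl i), h⟩
  · -- third weak condition
    ext i c
    have hre : V * Vᵀ * mstar S * ρ = (V * Vᵀ) * (mstar S * ρ) := by
      simp only [Matrix.mul_assoc]
    rw [hre]
    have hXsat : ∀ p p', Rf p p' → (mstar (minf S (V * Vᵀ)) * ρ) p' c →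
        (mstar (minf S (V * Vᵀ)) * ρ) p c := by
      intro p p' hRpp h
      have hl : (V * Vᵀ * (mstar (minf S (V * Vᵀ)) * ρ)) p c :=
        (pmul_apply _ _ _ _).mpr ⟨p', (hVVt p p').mpr hRpp, h⟩
      rw [← Matrix.mul_assoc, h3] at hl
      exact hl
    constructor
    · intro h
      rw [pmul_apply] at h
      obtain ⟨i', hVV, hP⟩ := h
      rw [pmul_apply] at hP
      obtain ⟨j, hS, hρ⟩ := hP
      obtain ⟨k, hTk, hSR⟩ := hdec ((hPie i' j).mp hS)
      have hXk : (mstar (minf S (V * Vᵀ)) * ρ) k c :=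
        (pmul_apply _ _ _ _).mpr ⟨j, (hPiVe k j).mpr hSR, hρ⟩
      obtain ⟨j', htj', hXj'⟩ := step (fun u => (mstar (minf S (V * Vᵀ)) * ρ) u c) hXsat
        k hXk i' hTk i ((hVVt i i').mp hVV)
      rw [pmul_apply] at hXj'
      obtain ⟨m, hPm, hρm⟩ := hXj'
      refine (pmul_apply _ _ _ _).mpr ⟨m, (hPie i m).mpr ?_, hρm⟩
      exact (hTsle htj').trans (Relation.ReflTransGen.mono (fun _ _ hh => hh.1) _ _ ((hPiVe j' m).mp hPm))
    · intro h
      exact (pmul_apply _ _ _ _).mpr ⟨i, (hVVt i i).mpr (hRrefl i), h⟩
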